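/- Fix integers d ≥ 2, p ≥ 2, n ≥ 1 and k ∈ {1,…,n}. For two distinct admissible multi-indices I ≠ I' (each with all entries ≤ d−1 and not identically zero), the polynomials Q_{k,I} and Q_{k,I'} defined below contain no pair of proportional monomials (i.e., no monomial of Q_{k,I} is a scalar multiple of a monomial of Q_{k,I'}). -/

import Mathlib

/-- The exponent multi-index with entry `e` at position `k` and `s * I j` elsewhere. -/
noncomputable def expVec {n : ℕ} (k : Fin n) (I : Fin n → ℕ) (s e : ℕ) : Fin n →₀ ℕ :=
  Finsupp.equivFunOnFinite.symm fun j => if j = k then e else s * I j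

/-- The polynomial `Q_{k,I}` from Lemma 4.2 of the paper. -/
noncomputable def Qpoly (d p : ℕ) {n : ℕ} (k : Fin n) (I : Fin n → ℕ) :
    MvPolynomial (Fin n) ℂ :=
  if I k = d - 1 then
    (-(d : ℂ) ^ (p - 1)) •
      ∑ i ∈ Finset.range p,
        MvPolynomial.monomial (expVec k I (d ^ i) (d ^ (p - 1) - d ^ i)) (1 : ℂ)
  else
    ((I k : ℂ) * (d : ℂ) ^ (p - 1) - (d : ℂ) ^ p) •
      (MvPolynomial.monomial (expVec k I (d ^ (p - 1)) (d ^ (p - 1) * (I k + 1) - 1)) (1 : ℂ) +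
        ∑ i ∈ Finset.range (p - 1),
          MvPolynomial.monomial (expVec k I (d ^ i) (d ^ (p - 1) - d ^ i * (d - I k))) (1 : ℂ))

lemma expVec_eq {n : ℕ} {k : Fin n} {I I' : Fin n → ℕ} {s e s' e' : ℕ}
    (h : expVec k I s e = expVec k I' s' e') :
    e = e' ∧ ∀ j, j ≠ k → s * I j = s' * I' j := by
  have h2 := Finsupp.equivFunOnFinite.symm.injective h
  constructor
  · have := congrFun h2 k; simpa using this
  · intro j hj
    have := congrFun h2 j; simpa [hj] using this

lemma Qpoly_support {d p n : ℕ} {k : Fin n} {I : Fin n → ℕ} {a : Fin n →₀ ℕ}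
    (h : a ∈ (Qpoly d p k I).support) :
    (I k = d - 1 ∧ ∃ i < p, a = expVec k I (d ^ i) (d ^ (p - 1) - d ^ i)) ∨
    (I k ≠ d - 1 ∧ (a = expVec k I (d ^ (p - 1)) (d ^ (p - 1) * (I k + 1) - 1) ∨
      ∃ i < p - 1, a = expVec k I (d ^ i) (d ^ (p - 1) - d ^ i * (d - I k)))) := by
  unfold Qpoly at h
  split_ifs at h with hk
  · left
    refine ⟨hk, ?_⟩
    have h1 : a ∈ (∑ i ∈ Finset.range p,
        MvPolynomial.monomial (expVec k I (d ^ i) (d ^ (p - 1) - d ^ i)) (1 : ℂ)).support :=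
      MvPolynomial.support_smul h
    have h2 := MvPolynomial.support_sum h1
    rw [Finset.mem_biUnion] at h2
    obtain ⟨i, hi, hmem⟩ := h2
    rw [MvPolynomial.support_monomial] at hmem
    simp only [one_ne_zero, if_false, Finset.mem_singleton] at hmem
    exact ⟨i, Finset.mem_range.mp hi, hmem⟩
  · right
    refine ⟨hk, ?_⟩
    have h1 : a ∈ (MvPolynomial.monomial (expVec k I (d ^ (p - 1)) (d ^ (p - 1) * (I k + 1) - 1)) (1 : ℂ) +
        ∑ i ∈ Finset.range (p - 1),
          MvPolynomial.monomial (expVec k I (d ^ i) (d ^ (p - 1) - d ^ i * (d - I k))) (1 : ℂ)).support :=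
      MvPolynomial.support_smul h
    have h2 := MvPolynomial.support_add h1
    rw [Finset.mem_union] at h2
    rcases h2 with h2 | h2
    · left
      rw [MvPolynomial.support_monomial] at h2
      simpa using h2
    · right
      have h3 := MvPolynomial.support_sum h2
      rw [Finset.mem_biUnion] at h3
      obtain ⟨i, hi, hmem⟩ := h3
      rw [MvPolynomial.support_monomial] at hmem
      simp only [one_ne_zero, if_false, Finset.mem_singleton] at hmem
      exact ⟨i, Finset.mem_range.mp hi, hmem⟩

lemma pow_eq_one_iff'' {d i : ℕ} (hd : 2 ≤ d) : d ^ i = 1 ↔ i = 0 := by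
  constructor
  · intro h
    by_contra h0
    have : d ≤ d ^ i := Nat.le_self_pow h0 d
    omega
  · intro h; subst h; simp

/-- If `d^i * m = d^i' * m'` with `2 ≤ m, m' ≤ d`, then `i = i'` and `m = m'`. -/
lemma pow_mul_cancel {d i i' m m' : ℕ} (hd : 2 ≤ d) (hm : 2 ≤ m) (hm' : 2 ≤ m')
    (hmd : m ≤ d) (hm'd : m' ≤ d) (h : d ^ i * m = d ^ i' * m') : i = i' ∧ m = m' := by
  have key : ∀ a b u v : ℕ, a < b → 2 ≤ u → 2 ≤ v → u ≤ d → d ^ a * u ≠ d ^ b * v := by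
    intro a b u v hab hu hv hud heq
    have h1 : d ^ a * u ≤ d ^ a * d := Nat.mul_le_mul_left _ hud
    have h2 : d ^ a * d = d ^ (a + 1) := by ring
    have h3 : d ^ (a + 1) ≤ d ^ b := Nat.pow_le_pow_right (by omega) (by omega)
    have h4 : d ^ b < d ^ b * v := by
      have : 0 < d ^ b := Nat.pow_pos (by omega)
      nlinarith
    omega
  have hii : i = i' := by
    rcases lt_trichotomy i i' with h1 | h1 | h1
    · exact absurd h (key i i' m m' h1 hm hm' hmd)
    · exact h1
    · exact absurd h.symm (key i' i m' m h1 hm' hm hm'd)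
  subst hii
  refine ⟨rfl, Nat.eq_of_mul_eq_mul_left (Nat.pow_pos (by omega)) h⟩

/-- Mixed case: `I k = d - 1` but `I' k ≠ d - 1` leads to a contradiction. -/
lemma mixed_case {d p n : ℕ} (hd : 2 ≤ d) (hp : 2 ≤ p) {k : Fin n}
    {I I' : Fin n → ℕ} (hIle : ∀ j, I j ≤ d - 1) (hI'le : ∀ j, I' j ≤ d - 1)
    (hI'0 : I' ≠ fun _ => 0) (hk' : I' k ≠ d - 1)
    {i : ℕ} (hi : i < p)
    (hcase : expVec k I (d ^ i) (d ^ (p - 1) - d ^ i)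
        = expVec k I' (d ^ (p - 1)) (d ^ (p - 1) * (I' k + 1) - 1)
      ∨ ∃ i' < p - 1, expVec k I (d ^ i) (d ^ (p - 1) - d ^ i)
        = expVec k I' (d ^ i') (d ^ (p - 1) - d ^ i' * (d - I' k))) : False := by
  have hA : 2 ≤ d ^ (p - 1) := le_trans hd (Nat.le_self_pow (by omega) d)
  have hB : 1 ≤ d ^ i := Nat.pow_pos (by omega)
  have hBA : d ^ i ≤ d ^ (p - 1) := Nat.pow_le_pow_right (by omega) (by omega)
  rcases hcase with h | ⟨i', hi', h⟩
  · obtain ⟨he, hj⟩ := expVec_eq h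
    -- d^{p-1} - d^i = d^{p-1}*(I' k + 1) - 1
    have hC : I' k = 0 ∨ d ^ (p - 1) ≤ d ^ (p - 1) * I' k := by
      rcases Nat.eq_zero_or_pos (I' k) with h0 | h0
      · exact Or.inl h0
      · right; nlinarith [hA]
    have hkey : I' k = 0 ∧ d ^ i = 1 := by
      have hexp : d ^ (p - 1) * (I' k + 1) = d ^ (p - 1) * I' k + d ^ (p - 1) := by ring
      rw [hexp] at he
      rcases hC with h0 | h0
      · refine ⟨h0, ?_⟩
        have hz : d ^ (p - 1) * I' k = 0 := by rw [h0, Nat.mul_zero]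
        omega
      · omega
    obtain ⟨hk0, hi1⟩ := hkey
    have hi0 : i = 0 := (pow_eq_one_iff'' hd).mp hi1
    -- now for j ≠ k : I j = d^{p-1} * I' j, so I' j = 0
    have hjz : ∀ j, I' j = 0 := by
      intro j
      by_cases hjk : j = k
      · rw [hjk, hk0]
      · have := hj j hjk
        rw [hi0] at this
        simp only [pow_zero, one_mul] at this
        by_contra hne0
        have h1 : 1 ≤ I' j := Nat.pos_of_ne_zero hne0
        have h2 : d ^ (p - 1) ≤ d ^ (p - 1) * I' j := Nat.le_mul_of_pos_right _ (by omega)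
        have h3 : I j ≤ d - 1 := hIle j
        have hdA : d ≤ d ^ (p - 1) := Nat.le_self_pow (by omega) d
        omega
    exact hI'0 (funext hjz)
  · obtain ⟨he, hj⟩ := expVec_eq h
    -- d^{p-1} - d^i = d^{p-1} - d^{i'} * (d - I' k)
    have hm2 : 2 ≤ d - I' k := by have := hI'le k; omega
    have hmd : d - I' k ≤ d := by omega
    have hCle : d ^ i' * (d - I' k) ≤ d ^ (p - 1) := by
      calc d ^ i' * (d - I' k) ≤ d ^ i' * d := Nat.mul_le_mul_left _ hmd
        _ = d ^ (i' + 1) := by ring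
        _ ≤ d ^ (p - 1) := Nat.pow_le_pow_right (by omega) (by omega)
    have heq : d ^ i = d ^ i' * (d - I' k) := by omega
    -- i' < i
    have hi'i : i' < i := by
      by_contra hle
      push_neg at hle
      have h1 : d ^ i ≤ d ^ i' := Nat.pow_le_pow_right (by omega) hle
      have h2 : 0 < d ^ i' := Nat.pow_pos (by omega)
      nlinarith
    have hsplit : d ^ i = d ^ i' * d ^ (i - i') := by
      rw [← pow_add]; congr 1; omega
    have hm : d ^ (i - i') = d - I' k := by
      have h0 : d ^ i' * d ^ (i - i') = d ^ i' * (d - I' k) := by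
        rw [← hsplit]; exact heq
      exact Nat.eq_of_mul_eq_mul_left (Nat.pow_pos (by omega)) h0
    have hdle : d ≤ d ^ (i - i') := Nat.le_self_pow (by omega) d
    have hk0 : I' k = 0 := by omega
    -- so d - I' k = d, and d^i = d^{i'} * d
    have hjz : ∀ j, I' j = 0 := by
      intro j
      by_cases hjk : j = k
      · rw [hjk, hk0]
      · have hjj := hj j hjk
        rw [hsplit, hm, hk0, Nat.sub_zero] at hjj
        have h2 : d ^ i' * d * I j = d ^ i' * (d * I j) := by ring
        rw [h2] at hjj
        have h3 : d * I j = I' j := Nat.eq_of_mul_eq_mul_left (Nat.pow_pos (by omega)) hjj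
        by_contra hne0
        have h4 : 1 ≤ I' j := Nat.pos_of_ne_zero hne0
        have h5 : I' j ≤ d - 1 := hI'le j
        have h6 : 1 ≤ I j := by
          rcases Nat.eq_zero_or_pos (I j) with h7 | h7
          · rw [h7, Nat.mul_zero] at h3; omega
          · exact h7
        have h8 : d ≤ d * I j := Nat.le_mul_of_pos_right _ (by omega)
        omega
    exact hI'0 (funext hjz)

theorem stmt14 (d p n : ℕ) (hd : 2 ≤ d) (hp : 2 ≤ p) (k : Fin n)
    (I I' : Fin n → ℕ) (hI : ∀ j, I j ≤ d - 1) (hI' : ∀ j, I' j ≤ d - 1)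
    (hI0 : I ≠ (fun _ => 0)) (hI'0 : I' ≠ (fun _ => 0)) (hne : I ≠ I') :
    Disjoint (Qpoly d p k I).support (Qpoly d p k I').support := by
  rw [Finset.disjoint_left]
  intro a ha ha'
  have h1 := Qpoly_support ha
  have h2 := Qpoly_support ha'
  have hA : 2 ≤ d ^ (p - 1) := le_trans hd (Nat.le_self_pow (by omega) d)
  rcases h1 with ⟨hk, i, hi, rfl⟩ | ⟨hk, hc⟩
  · rcases h2 with ⟨hk', i', hi', heq⟩ | ⟨hk', hc'⟩
    · -- both I k = I' k = d - 1
      obtain ⟨he, hj⟩ := expVec_eq heq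
      have hBA : d ^ i ≤ d ^ (p - 1) := Nat.pow_le_pow_right (by omega) (by omega)
      have hBA' : d ^ i' ≤ d ^ (p - 1) := Nat.pow_le_pow_right (by omega) (by omega)
      have hpow : d ^ i = d ^ i' := by omega
      have hii : i = i' := Nat.pow_right_injective hd hpow
      apply hne
      funext j
      by_cases hjk : j = k
      · rw [hjk, hk, hk']
      · have := hj j hjk
        rw [hii] at this
        exact Nat.eq_of_mul_eq_mul_left (Nat.pow_pos (by omega)) this
    · -- I k = d - 1, I' k ≠ d - 1
      rcases hc' with h | ⟨i', hi', h⟩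
      · exact mixed_case hd hp hI hI' hI'0 hk' hi (Or.inl h)
      · exact mixed_case hd hp hI hI' hI'0 hk' hi (Or.inr ⟨i', hi', h⟩)
  · rcases h2 with ⟨hk', i', hi', heq⟩ | ⟨hk', hc'⟩
    · -- I' k = d - 1, I k ≠ d - 1 : symmetric
      rcases hc with h | ⟨i'', hi'', h⟩
      · exact mixed_case hd hp hI' hI hI0 hk hi' (Or.inl (heq.symm.trans h))
      · exact mixed_case hd hp hI' hI hI0 hk hi' (Or.inr ⟨i'', hi'', heq.symm.trans h⟩)
    · -- both ≠ d - 1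
      rcases hc with h | ⟨i, hi, h⟩ <;> rcases hc' with h' | ⟨i', hi', h'⟩
      · -- T0 vs T0
        obtain ⟨he, hj⟩ := expVec_eq (h.symm.trans h')
        have hu : 1 ≤ d ^ (p - 1) * (I k + 1) := by nlinarith
        have hv : 1 ≤ d ^ (p - 1) * (I' k + 1) := by nlinarith
        have huv : d ^ (p - 1) * (I k + 1) = d ^ (p - 1) * (I' k + 1) := by omega
        have hkk : I k = I' k := by
          have := Nat.eq_of_mul_eq_mul_left (show 0 < d ^ (p-1) by omega) huv
          omega
        apply hne
        funext j
        by_cases hjk : j = k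
        · rw [hjk, hkk]
        · exact Nat.eq_of_mul_eq_mul_left (show 0 < d ^ (p-1) by omega) (hj j hjk)
      · -- T0 vs Ti' : impossible by size
        obtain ⟨he, hj⟩ := expVec_eq (h.symm.trans h')
        have hm2 : 2 ≤ d - I' k := by have := hI' k; omega
        have hC2 : 2 ≤ d ^ i' * (d - I' k) := by
          have : 1 ≤ d ^ i' := Nat.pow_pos (by omega)
          nlinarith
        have hCle : d ^ i' * (d - I' k) ≤ d ^ (p - 1) := by
          calc d ^ i' * (d - I' k) ≤ d ^ i' * d := Nat.mul_le_mul_left _ (by omega)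
            _ = d ^ (i' + 1) := by ring
            _ ≤ d ^ (p - 1) := Nat.pow_le_pow_right (by omega) (by omega)
        have hexp : d ^ (p - 1) * (I k + 1) = d ^ (p - 1) * I k + d ^ (p - 1) := by ring
        rw [hexp] at he
        omega
      · -- Ti vs T0 : symmetric, impossible by size
        obtain ⟨he, hj⟩ := expVec_eq (h.symm.trans h')
        have hm2 : 2 ≤ d - I k := by have := hI k; omega
        have hC2 : 2 ≤ d ^ i * (d - I k) := by
          have : 1 ≤ d ^ i := Nat.pow_pos (by omega)
          nlinarith
        have hCle : d ^ i * (d - I k) ≤ d ^ (p - 1) := by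
          calc d ^ i * (d - I k) ≤ d ^ i * d := Nat.mul_le_mul_left _ (by omega)
            _ = d ^ (i + 1) := by ring
            _ ≤ d ^ (p - 1) := Nat.pow_le_pow_right (by omega) (by omega)
        have hexp : d ^ (p - 1) * (I' k + 1) = d ^ (p - 1) * I' k + d ^ (p - 1) := by ring
        rw [hexp] at he
        omega
      · -- Ti vs Ti'
        obtain ⟨he, hj⟩ := expVec_eq (h.symm.trans h')
        have hm2 : 2 ≤ d - I k := by have := hI k; omega
        have hm2' : 2 ≤ d - I' k := by have := hI' k; omega
        have hCle : d ^ i * (d - I k) ≤ d ^ (p - 1) := by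
          calc d ^ i * (d - I k) ≤ d ^ i * d := Nat.mul_le_mul_left _ (by omega)
            _ = d ^ (i + 1) := by ring
            _ ≤ d ^ (p - 1) := Nat.pow_le_pow_right (by omega) (by omega)
        have hCle' : d ^ i' * (d - I' k) ≤ d ^ (p - 1) := by
          calc d ^ i' * (d - I' k) ≤ d ^ i' * d := Nat.mul_le_mul_left _ (by omega)
            _ = d ^ (i' + 1) := by ring
            _ ≤ d ^ (p - 1) := Nat.pow_le_pow_right (by omega) (by omega)
        have heq2 : d ^ i * (d - I k) = d ^ i' * (d - I' k) := by omega
        obtain ⟨hii, hmm⟩ := pow_mul_cancel hd hm2 hm2' (by omega) (by omega) heq2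
        have hkk : I k = I' k := by omega
        apply hne
        funext j
        by_cases hjk : j = k
        · rw [hjk, hkk]
        · have := hj j hjk
          rw [hii] at this
          exact Nat.eq_of_mul_eq_mul_left (Nat.pow_pos (by omega)) this
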